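/- Let β ∈ ℂ, τ_i ∈ ℝ, ν_i ∈ ℝ with ν_i ≠ 0, and f_c > 0. Define H(t,f) = β · exp(2πi·(ν_i/f_c)·(f_c+f)·t) · exp(−2πi·f·τ_i). Then the 2D symplectic Fourier transform h(τ,ν) = ∫∫ H(t,f) · exp(−2πi(νt − τf)) dt df (in the distributional sense) equals β · |f_c/ν_i| · exp(2πi·(f_c/ν_i)·(τ−τ_i)·(ν−ν_i)). -/

import Mathlib

open MeasureTheory Complex Real

open FourierTransform SchwartzMap

noncomputable def DSEL : EuclideanSpace ℝ (Fin 2) ≃L[ℝ] ℝ × ℝ :=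
  (EuclideanSpace.equiv (Fin 2) ℝ).trans (ContinuousLinearEquiv.finTwoArrow ℝ ℝ)

noncomputable def DSEW (a b : ℝ) : EuclideanSpace ℝ (Fin 2) := DSEL.symm (a, b)
@[simp] lemma DSEW_zero (a b : ℝ) : DSEW a b 0 = a := rfl
@[simp] lemma DSEW_one (a b : ℝ) : DSEW a b 1 = b := rfl

noncomputable def DSEMeq : EuclideanSpace ℝ (Fin 2) ≃ᵐ (ℝ × ℝ) :=
  (MeasurableEquiv.toLp 2 (Fin 2 → ℝ)).symm.trans MeasurableEquiv.finTwoArrow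

@[simp] lemma DSEMeq_apply (x : EuclideanSpace ℝ (Fin 2)) : DSEMeq x = (x 0, x 1) := rfl

lemma DSEMeq_mp : MeasurePreserving DSEMeq :=
  (volume_preserving_finTwoArrow ℝ).comp (EuclideanSpace.volume_preserving_symm_measurableEquiv_toLp (Fin 2))

lemma norm_cexp_real_mul_I (r : ℝ) : ‖Complex.exp ((r:ℂ) * Complex.I)‖ = 1 := by
  rw [Complex.norm_exp_ofReal_mul_I]

lemma abs_le_norm_DSEW (a b : ℝ) : |a| ≤ ‖DSEW a b‖ := by
  rw [EuclideanSpace.norm_eq]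
  simp only [Fin.sum_univ_two, DSEW_zero, DSEW_one, Real.norm_eq_abs]
  calc |a| = Real.sqrt (|a|^2) := by rw [Real.sqrt_sq (abs_nonneg a)]
    _ ≤ _ := Real.sqrt_le_sqrt (by nlinarith [sq_nonneg (|b|)])

lemma DSE_integrable_aux : Integrable (fun x : ℝ => ((1+|x|)^2)⁻¹) := by
  apply integrable_inv_one_add_sq.mono'
    ((Continuous.inv₀ (by continuity) (fun x => by positivity)).aestronglyMeasurable)
  filter_upwards with x
  rw [Real.norm_eq_abs, Pi.inv_apply, _root_.abs_of_nonneg (by positivity : (0:ℝ) ≤ ((1+|x|)^2)⁻¹)]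
  apply inv_anti₀ (by positivity)
  nlinarith [abs_nonneg x, _root_.sq_abs x]

lemma DSE_aux_le_one (x : ℝ) : ((1+|x|)^2)⁻¹ ≤ 1 := by
  rw [inv_le_one_iff₀]
  right
  nlinarith [abs_nonneg x]

lemma DSE_prod_decay (φ : SchwartzMap (ℝ×ℝ) ℂ) : ∃ C, 0 ≤ C ∧ ∀ τ ν : ℝ,
    ‖φ (τ,ν)‖ ≤ C * ((1+|τ|)^2)⁻¹ * ((1+|ν|)^2)⁻¹ := by
  obtain ⟨C, hC⟩ : ∃ C, ∀ x, (1+‖x‖)^4 * ‖φ x‖ ≤ C := by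
    refine ⟨2^4 * ((Finset.Iic (4,0)).sup (fun m => SchwartzMap.seminorm ℝ m.1 m.2) φ), fun x => ?_⟩
    have := SchwartzMap.one_add_le_sup_seminorm_apply (𝕜 := ℝ) (m := (4,0)) le_rfl le_rfl φ x
    simpa using this
  refine ⟨C, ?_, fun τ ν => ?_⟩
  · have := hC 0; simp at this; exact le_trans (norm_nonneg _) this
  · have h1 : (1+|τ|) ≤ 1 + ‖(τ,ν)‖ := by
      have : |τ| ≤ ‖(τ,ν)‖ := by rw [Prod.norm_def]; exact le_max_left _ _
      linarith
    have h2 : (1+|ν|) ≤ 1 + ‖(τ,ν)‖ := by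
      have : |ν| ≤ ‖(τ,ν)‖ := by rw [Prod.norm_def]; exact le_max_right _ _
      linarith
    have hmul : (1+|τ|)^2 * (1+|ν|)^2 ≤ (1+‖(τ,ν)‖)^4 := by
      calc (1+|τ|)^2 * (1+|ν|)^2 ≤ (1+‖(τ,ν)‖)^2 * (1+‖(τ,ν)‖)^2 :=
            mul_le_mul (pow_le_pow_left₀ (by positivity) h1 2)
              (pow_le_pow_left₀ (by positivity) h2 2) (by positivity) (by positivity)
        _ = (1+‖(τ,ν)‖)^4 := by ring
    have key : (1+|τ|)^2 * (1+|ν|)^2 * ‖φ (τ,ν)‖ ≤ C :=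
      le_trans (mul_le_mul_of_nonneg_right hmul (norm_nonneg _)) (hC (τ,ν))
    have h3 : ‖φ (τ,ν)‖ ≤ C / ((1+|τ|)^2 * (1+|ν|)^2) := by
      rw [le_div_iff₀ (by positivity)]
      calc ‖φ (τ,ν)‖ * ((1+|τ|)^2 * (1+|ν|)^2) = (1+|τ|)^2 * (1+|ν|)^2 * ‖φ (τ,ν)‖ := by ring
        _ ≤ C := key
    calc ‖φ (τ,ν)‖ ≤ C / ((1+|τ|)^2 * (1+|ν|)^2) := h3
      _ = C * ((1+|τ|)^2)⁻¹ * ((1+|ν|)^2)⁻¹ := by rw [div_eq_mul_inv, mul_inv]; ring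

lemma DSE_decay2 (Φ : SchwartzMap (EuclideanSpace ℝ (Fin 2)) ℂ) : ∃ C, 0 ≤ C ∧ ∀ v,
    ‖Φ v‖ ≤ C * ((1+‖v‖)^2)⁻¹ := by
  obtain ⟨C, hC⟩ : ∃ C, ∀ x, (1+‖x‖)^2 * ‖Φ x‖ ≤ C := by
    refine ⟨2^2 * ((Finset.Iic (2,0)).sup (fun m => SchwartzMap.seminorm ℝ m.1 m.2) Φ), fun x => ?_⟩
    have := SchwartzMap.one_add_le_sup_seminorm_apply (𝕜 := ℝ) (m := (2,0)) le_rfl le_rfl Φ x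
    simpa using this
  refine ⟨C, ?_, fun v => ?_⟩
  · have := hC 0; simp at this; exact le_trans (norm_nonneg _) this
  · have hv : (0:ℝ) < (1+‖v‖)^2 := by positivity
    have h3 : ‖Φ v‖ ≤ C / ((1+‖v‖)^2) := by
      rw [le_div_iff₀ hv]
      calc ‖Φ v‖ * (1+‖v‖)^2 = (1+‖v‖)^2 * ‖Φ v‖ := by ring
        _ ≤ C := hC v
    calc ‖Φ v‖ ≤ C / ((1+‖v‖)^2) := h3
      _ = C * ((1+‖v‖)^2)⁻¹ := div_eq_mul_inv C _

noncomputable def DSEPsi (φ : SchwartzMap (ℝ×ℝ) ℂ) : SchwartzMap (EuclideanSpace ℝ (Fin 2)) ℂ :=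
  SchwartzMap.compCLMOfContinuousLinearEquiv ℝ DSEL φ

noncomputable def DSEPhi (φ : SchwartzMap (ℝ×ℝ) ℂ) : SchwartzMap (EuclideanSpace ℝ (Fin 2)) ℂ :=
  SchwartzMap.fourierTransformCLM ℂ (DSEPsi φ)

@[simp] lemma DSEPsi_apply (φ : SchwartzMap (ℝ×ℝ) ℂ) (x) : DSEPsi φ x = φ (x 0, x 1) := rfl

lemma DSE_integrable_mul_cexp (φ : SchwartzMap (ℝ×ℝ) ℂ) (a b : ℝ) :
    Integrable (fun p : ℝ×ℝ => φ p * Complex.exp (-(2*(π:ℂ)*Complex.I) * (p.1*a + p.2*b))) := by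
  apply φ.integrable.norm.mono'
  · exact (φ.continuous.mul (Complex.continuous_exp.comp (by fun_prop))).aestronglyMeasurable
  · filter_upwards with p
    rw [norm_mul]
    have : -(2*(π:ℂ)*Complex.I) * (p.1*a + p.2*b) = ((-2*π*(p.1*a+p.2*b) : ℝ) : ℂ) * Complex.I := by
      push_cast; ring
    rw [this, norm_cexp_real_mul_I, mul_one]

lemma DSE_Phi_formula (φ : SchwartzMap (ℝ×ℝ) ℂ) (a b : ℝ) :
    (∫ τ:ℝ, ∫ ν:ℝ, φ (τ,ν) * Complex.exp (-(2*(π:ℂ)*Complex.I) * (τ*a + ν*b)))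
      = DSEPhi φ (DSEW a b) := by
  have hi := DSE_integrable_mul_cexp φ a b
  rw [Measure.volume_eq_prod] at hi
  have h1 : (∫ τ:ℝ, ∫ ν:ℝ, φ (τ,ν) * Complex.exp (-(2*(π:ℂ)*Complex.I) * (τ*a + ν*b)))
      = ∫ p : ℝ×ℝ, φ p * Complex.exp (-(2*(π:ℂ)*Complex.I) * (p.1*a + p.2*b)) := by
    rw [Measure.volume_eq_prod]
    exact MeasureTheory.integral_integral hi
  rw [h1, ← DSEMeq_mp.integral_comp DSEMeq.measurableEmbedding]
  rw [show (⇑(DSEPhi φ) : EuclideanSpace ℝ (Fin 2) → ℂ) = 𝓕 (⇑(DSEPsi φ)) from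
    rfl]
  rw [Real.fourier_eq']
  refine integral_congr_ae (Filter.Eventually.of_forall fun x => ?_)
  simp only [DSEMeq_apply, smul_eq_mul, DSEPsi_apply]
  rw [mul_comm]
  congr 1
  have : (inner ℝ x (DSEW a b) : ℝ) = (x 0) * a + (x 1) * b := by
    simp [PiLp.inner_apply, Fin.sum_univ_two]
    ring
  rw [this]
  push_cast; ring

/-- The partial Fourier transform in the second variable. -/
noncomputable def DSEg (φ : SchwartzMap (ℝ×ℝ) ℂ) (t τ : ℝ) : ℂ :=
  ∫ ν : ℝ, φ (τ, ν) * Complex.exp (-(2*(π:ℂ)*Complex.I) * ν * t)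

lemma DSEg_def (φ : SchwartzMap (ℝ×ℝ) ℂ) (t τ : ℝ) :
    DSEg φ t τ = ∫ ν : ℝ, φ (τ, ν) * Complex.exp (-(2*(π:ℂ)*Complex.I) * ν * t) := rfl

lemma DSE_finv_eq (G : ℝ → ℂ) (ξ : ℝ) :
    𝓕⁻ G ξ = ∫ x:ℝ, Complex.exp (((2*π*(x*ξ) : ℝ) : ℂ) * Complex.I) * G x := by
  rw [Real.fourierInv_eq']
  simp [smul_eq_mul, RCLike.inner_apply, conj_trivial]
  simp only [mul_comm (ξ:ℂ)]

lemma DSE_f_eq (G : ℝ → ℂ) (ξ : ℝ) :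
    𝓕 G ξ = ∫ x:ℝ, Complex.exp (((-2*π*(x*ξ) : ℝ) : ℂ) * Complex.I) * G x := by
  rw [Real.fourier_eq']
  simp [smul_eq_mul, RCLike.inner_apply, conj_trivial]
  simp only [mul_comm (ξ:ℂ)]

lemma DSE_slice_integrable (φ : SchwartzMap (ℝ×ℝ) ℂ) (t τ : ℝ) :
    Integrable (fun ν : ℝ => φ (τ, ν) * Complex.exp (-(2*(π:ℂ)*Complex.I) * ν * t)) := by
  obtain ⟨C, hC0, hC⟩ := DSE_prod_decay φ
  apply Integrable.mono' (g := fun ν : ℝ => C * ((1+|ν|)^2)⁻¹) (DSE_integrable_aux.const_mul C)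
  · refine Continuous.aestronglyMeasurable ?_
    exact (φ.continuous.comp (by fun_prop)).mul (Complex.continuous_exp.comp (by fun_prop))
  · filter_upwards with ν
    rw [norm_mul]
    have he : -(2*(π:ℂ)*Complex.I) * ν * t = ((-2*π*(ν*t) : ℝ) : ℂ) * Complex.I := by
      push_cast; ring
    rw [he, norm_cexp_real_mul_I, mul_one]
    calc ‖φ (τ,ν)‖ ≤ C * ((1+|τ|)^2)⁻¹ * ((1+|ν|)^2)⁻¹ := hC τ ν
      _ ≤ C * 1 * ((1+|ν|)^2)⁻¹ := by
          apply mul_le_mul_of_nonneg_right _ (by positivity)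
          exact mul_le_mul_of_nonneg_left (DSE_aux_le_one τ) hC0
      _ = C * ((1+|ν|)^2)⁻¹ := by ring

lemma DSEg_cont (φ : SchwartzMap (ℝ×ℝ) ℂ) (t : ℝ) : Continuous (DSEg φ t) := by
  obtain ⟨C, hC0, hC⟩ := DSE_prod_decay φ
  apply continuous_of_dominated (bound := fun ν : ℝ => C * ((1+|ν|)^2)⁻¹)
  · intro τ
    refine Continuous.aestronglyMeasurable ?_
    exact (φ.continuous.comp (by fun_prop)).mul (Complex.continuous_exp.comp (by fun_prop))
  · intro τ
    filter_upwards with ν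
    rw [norm_mul]
    have he : -(2*(π:ℂ)*Complex.I) * ν * t = ((-2*π*(ν*t) : ℝ) : ℂ) * Complex.I := by
      push_cast; ring
    rw [he, norm_cexp_real_mul_I, mul_one]
    calc ‖φ (τ,ν)‖ ≤ C * ((1+|τ|)^2)⁻¹ * ((1+|ν|)^2)⁻¹ := hC τ ν
      _ ≤ C * 1 * ((1+|ν|)^2)⁻¹ := by
          apply mul_le_mul_of_nonneg_right _ (by positivity)
          exact mul_le_mul_of_nonneg_left (DSE_aux_le_one τ) hC0
      _ = C * ((1+|ν|)^2)⁻¹ := by ring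
  · exact DSE_integrable_aux.const_mul C
  · filter_upwards with ν
    exact (φ.continuous.comp (by fun_prop)).mul continuous_const

lemma DSEg_integrable (φ : SchwartzMap (ℝ×ℝ) ℂ) (t : ℝ) : Integrable (DSEg φ t) := by
  obtain ⟨C, hC0, hC⟩ := DSE_prod_decay φ
  set K : ℝ := ∫ ν : ℝ, ((1+|ν|)^2)⁻¹ with hK
  have hK0 : 0 ≤ K := integral_nonneg (fun ν => by positivity)
  apply Integrable.mono' (g := fun τ : ℝ => (C * K) * ((1+|τ|)^2)⁻¹)
    (DSE_integrable_aux.const_mul (C*K)) ((DSEg_cont φ t).aestronglyMeasurable)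
  filter_upwards with τ
  calc ‖DSEg φ t τ‖ ≤ ∫ ν : ℝ, ‖φ (τ, ν) * Complex.exp (-(2*(π:ℂ)*Complex.I) * ν * t)‖ :=
        norm_integral_le_integral_norm _
    _ ≤ ∫ ν : ℝ, (C * ((1+|τ|)^2)⁻¹) * ((1+|ν|)^2)⁻¹ := by
        apply integral_mono (DSE_slice_integrable φ t τ).norm
          (DSE_integrable_aux.const_mul _)
        intro ν
        dsimp only
        rw [norm_mul]
        have he : -(2*(π:ℂ)*Complex.I) * ν * t = ((-2*π*(ν*t) : ℝ) : ℂ) * Complex.I := by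
          push_cast; ring
        rw [he, norm_cexp_real_mul_I, mul_one]
        exact hC τ ν
    _ = (C * ((1+|τ|)^2)⁻¹) * K := by rw [integral_const_mul]
    _ = (C * K) * ((1+|τ|)^2)⁻¹ := by ring

lemma DSEg_fourier (φ : SchwartzMap (ℝ×ℝ) ℂ) (t f : ℝ) :
    𝓕 (DSEg φ t) f = DSEPhi φ (DSEW f t) := by
  rw [← DSE_Phi_formula φ f t, DSE_f_eq]
  refine integral_congr_ae (Filter.Eventually.of_forall fun τ => ?_)
  dsimp only
  rw [DSEg_def, ← integral_const_mul]
  refine integral_congr_ae (Filter.Eventually.of_forall fun ν => ?_)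
  dsimp only
  rw [← mul_assoc, mul_comm (Complex.exp _) (φ _), mul_assoc, ← Complex.exp_add]
  congr 2
  push_cast; ring

lemma DSEg_fourier_integrable (φ : SchwartzMap (ℝ×ℝ) ℂ) (t : ℝ) :
    Integrable (𝓕 (DSEg φ t)) := by
  obtain ⟨C, hC0, hC⟩ := DSE_decay2 (DSEPhi φ)
  rw [show 𝓕 (DSEg φ t) = fun f => DSEPhi φ (DSEW f t) from funext (DSEg_fourier φ t)]
  apply Integrable.mono' (g := fun f : ℝ => C * ((1+|f|)^2)⁻¹) (DSE_integrable_aux.const_mul C)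
  · refine Continuous.aestronglyMeasurable ?_
    exact (DSEPhi φ).continuous.comp
      (DSEL.symm.continuous.comp (continuous_id.prodMk continuous_const))
  · filter_upwards with f
    calc ‖DSEPhi φ (DSEW f t)‖ ≤ C * ((1+‖DSEW f t‖)^2)⁻¹ := hC _
      _ ≤ C * ((1+|f|)^2)⁻¹ := by
          apply mul_le_mul_of_nonneg_left _ hC0
          apply inv_anti₀ (by positivity)
          apply pow_le_pow_left₀ (by positivity)
          linarith [abs_le_norm_DSEW f t]

lemma DSE_inversion (φ : SchwartzMap (ℝ×ℝ) ℂ) (t a : ℝ) :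
    (∫ f : ℝ, Complex.exp (((2*π*(f*a) : ℝ) : ℂ) * Complex.I) * 𝓕⁻ (DSEg φ t) f)
      = DSEg φ t (-a) := by
  rw [← DSE_finv_eq (𝓕⁻ (DSEg φ t)) a,
    Real.fourierInv_eq_fourier_neg (𝓕⁻ (DSEg φ t)) a,
    (DSEg_cont φ t).fourier_fourierInv_eq (DSEg_integrable φ t) (DSEg_fourier_integrable φ t)]

/-- The delay-Doppler response (distributional symplectic Fourier transform) of a
single-path time-variant frequency response with Doppler Squint Effect equals
`β * |f_c/ν_i| * exp(2πi (f_c/ν_i)(τ−τ_i)(ν−ν_i))`, stated in the sense of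
tempered distributions (tested against Schwartz functions). -/
theorem stmt0 (β : ℂ) (τi νi fc : ℝ) (hν : νi ≠ 0) (hfc : 0 < fc)
    (H h : ℝ → ℝ → ℂ)
    (hH : ∀ t f : ℝ, H t f =
      β * Complex.exp (2 * (π : ℂ) * Complex.I * ((νi : ℂ)/(fc : ℂ)) * ((fc : ℂ) + f) * t)
        * Complex.exp (-(2 * (π : ℂ) * Complex.I) * f * τi))
    (hh : ∀ τ ν : ℝ, h τ ν =
      β * (|fc / νi| : ℝ)
        * Complex.exp (2 * (π : ℂ) * Complex.I * ((fc : ℂ)/(νi : ℂ)) * ((τ : ℂ) - τi) * ((ν : ℂ) - νi))) :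
    ∀ φ : SchwartzMap (ℝ × ℝ) ℂ,
      (∫ t : ℝ, ∫ f : ℝ, H t f *
        ∫ τ : ℝ, ∫ ν : ℝ, φ (τ, ν) *
          Complex.exp (-(2 * (π : ℂ) * Complex.I) * ((ν : ℂ) * t - (τ : ℂ) * f)))
      = ∫ τ : ℝ, ∫ ν : ℝ, h τ ν * φ (τ, ν) := by
  intro φ
  have hfcC : (fc:ℂ) ≠ 0 := by exact_mod_cast hfc.ne'
  have hνC : (νi:ℂ) ≠ 0 := by exact_mod_cast hν
  have hcne : fc/νi ≠ 0 := div_ne_zero hfc.ne' hν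
  -- Step 1: the inner double integral is the inverse Fourier transform of `DSEg φ t`.
  have hInner : ∀ t f : ℝ,
      (∫ τ : ℝ, ∫ ν : ℝ, φ (τ, ν) *
        Complex.exp (-(2 * (π : ℂ) * Complex.I) * ((ν : ℂ) * t - (τ : ℂ) * f)))
      = 𝓕⁻ (DSEg φ t) f := by
    intro t f
    rw [DSE_finv_eq]
    refine integral_congr_ae (Filter.Eventually.of_forall fun τ => ?_)
    dsimp only
    rw [DSEg_def, ← integral_const_mul]
    refine integral_congr_ae (Filter.Eventually.of_forall fun ν => ?_)
    dsimp only
    have hexp : Complex.exp (-(2 * (π : ℂ) * Complex.I) * ((ν : ℂ) * t - (τ : ℂ) * f))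
        = Complex.exp (((2*π*(τ*f) : ℝ) : ℂ) * Complex.I)
          * Complex.exp (-(2*(π:ℂ)*Complex.I) * ν * t) := by
      rw [← Complex.exp_add]
      congr 1
      push_cast; ring
    rw [hexp]
    ring
  -- Step 2: the f-integral, via Fourier inversion.
  have hFint : ∀ t : ℝ, (∫ f : ℝ, H t f * 𝓕⁻ (DSEg φ t) f)
      = (β * Complex.exp (2*(π:ℂ)*Complex.I*νi*t)) * DSEg φ t (τi - (νi/fc)*t) := by
    intro t
    have hsplit : ∀ f : ℝ, H t f * 𝓕⁻ (DSEg φ t) f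
        = (β * Complex.exp (2*(π:ℂ)*Complex.I*νi*t)) *
          (Complex.exp (((2*π*(f*((νi/fc)*t - τi)) : ℝ) : ℂ) * Complex.I) * 𝓕⁻ (DSEg φ t) f) := by
      intro f
      rw [hH]
      have hexp : Complex.exp (2 * (π : ℂ) * Complex.I * ((νi : ℂ)/(fc : ℂ)) * ((fc : ℂ) + f) * t)
            * Complex.exp (-(2 * (π : ℂ) * Complex.I) * f * τi)
          = Complex.exp (2*(π:ℂ)*Complex.I*νi*t)
            * Complex.exp (((2*π*(f*((νi/fc)*t - τi)) : ℝ) : ℂ) * Complex.I) := by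
        rw [← Complex.exp_add, ← Complex.exp_add]
        congr 1
        push_cast
        field_simp
        ring
      rw [mul_assoc β, hexp]
      ring
    rw [integral_congr_ae (Filter.Eventually.of_forall hsplit), integral_const_mul]
    congr 1
    have := DSE_inversion φ t ((νi/fc)*t - τi)
    rw [neg_sub] at this
    exact this
  -- Step 3: assemble and substitute.
  have hLHS : (∫ t : ℝ, ∫ f : ℝ, H t f *
        ∫ τ : ℝ, ∫ ν : ℝ, φ (τ, ν) *
          Complex.exp (-(2 * (π : ℂ) * Complex.I) * ((ν : ℂ) * t - (τ : ℂ) * f)))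
      = ∫ t : ℝ, (β * Complex.exp (2*(π:ℂ)*Complex.I*νi*t)) * DSEg φ t (τi - (νi/fc)*t) := by
    refine integral_congr_ae (Filter.Eventually.of_forall fun t => ?_)
    dsimp only
    simp only [hInner]
    exact hFint t
  set F : ℝ → ℂ := fun t => (β * Complex.exp (2*(π:ℂ)*Complex.I*νi*t)) * DSEg φ t (τi - (νi/fc)*t)
    with hF
  have hsub : (∫ t : ℝ, F t) = |fc/νi| • ∫ τ : ℝ, F ((fc/νi) * (τi - τ)) := by
    have h1 : (∫ τ : ℝ, F ((fc/νi) * (τi - τ))) = ∫ u : ℝ, F ((fc/νi) * u) := by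
      have e1 : (∫ τ : ℝ, F ((fc/νi) * (τi - τ)))
          = ∫ τ : ℝ, (fun u => F ((fc/νi) * (τi + u))) (-τ) := by
        refine integral_congr_ae (Filter.Eventually.of_forall fun τ => ?_)
        dsimp only
        rw [← sub_eq_add_neg]
      rw [e1]
      exact (integral_neg_eq_self (fun u => F ((fc/νi) * (τi + u))) volume).trans
        (integral_add_left_eq_self (fun u => F ((fc/νi) * u)) τi)
    have h2 : |fc/νi| • (∫ τ : ℝ, F ((fc/νi) * (τi - τ))) = ∫ t : ℝ, F t := by
      rw [h1, Measure.integral_comp_mul_left F (fc/νi), smul_smul, ← abs_mul,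
        mul_inv_cancel₀ hcne, abs_one, one_smul]
    exact h2.symm
  have harg : ∀ τ : ℝ, τi - (νi/fc)*((fc/νi) * (τi - τ)) = τ := by
    intro τ; field_simp; ring
  have key : ∀ τ : ℝ, F ((fc/νi) * (τi - τ))
      = β * ∫ ν : ℝ, Complex.exp (2 * (π : ℂ) * Complex.I * ((fc : ℂ)/(νi : ℂ))
          * ((τ : ℂ) - τi) * ((ν : ℂ) - νi)) * φ (τ, ν) := by
    intro τ
    rw [hF]
    dsimp only
    rw [harg τ, DSEg_def, ← integral_const_mul, ← integral_const_mul]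
    refine integral_congr_ae (Filter.Eventually.of_forall fun ν => ?_)
    dsimp only
    have hexp : Complex.exp (2*(π:ℂ)*Complex.I*νi*((fc/νi) * (τi - τ) : ℝ))
        * Complex.exp (-(2*(π:ℂ)*Complex.I) * ν * ((fc/νi) * (τi - τ) : ℝ))
        = Complex.exp (2 * (π : ℂ) * Complex.I * ((fc : ℂ)/(νi : ℂ))
          * ((τ : ℂ) - τi) * ((ν : ℂ) - νi)) := by
      rw [← Complex.exp_add]
      congr 1
      push_cast
      field_simp
      ring
    calc (β * Complex.exp (2*(π:ℂ)*Complex.I*νi*((fc/νi) * (τi - τ) : ℝ)))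
          * (φ (τ,ν) * Complex.exp (-(2*(π:ℂ)*Complex.I) * ν * ((fc/νi) * (τi - τ) : ℝ)))
        = β * ((Complex.exp (2*(π:ℂ)*Complex.I*νi*((fc/νi) * (τi - τ) : ℝ))
          * Complex.exp (-(2*(π:ℂ)*Complex.I) * ν * ((fc/νi) * (τi - τ) : ℝ))) * φ (τ,ν)) := by
          ring
      _ = _ := by rw [hexp]
  have hRHS : (∫ τ : ℝ, ∫ ν : ℝ, h τ ν * φ (τ, ν))
      = (β * ((|fc / νi| : ℝ) : ℂ)) * ∫ τ : ℝ, ∫ ν : ℝ,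
          Complex.exp (2 * (π : ℂ) * Complex.I * ((fc : ℂ)/(νi : ℂ))
            * ((τ : ℂ) - τi) * ((ν : ℂ) - νi)) * φ (τ, ν) := by
    rw [← integral_const_mul]
    refine integral_congr_ae (Filter.Eventually.of_forall fun τ => ?_)
    dsimp only
    rw [← integral_const_mul]
    refine integral_congr_ae (Filter.Eventually.of_forall fun ν => ?_)
    dsimp only
    rw [hh]
    ring
  calc (∫ t : ℝ, ∫ f : ℝ, H t f *
        ∫ τ : ℝ, ∫ ν : ℝ, φ (τ, ν) *
          Complex.exp (-(2 * (π : ℂ) * Complex.I) * ((ν : ℂ) * t - (τ : ℂ) * f)))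
      = ∫ t : ℝ, F t := hLHS
    _ = |fc/νi| • ∫ τ : ℝ, F ((fc/νi) * (τi - τ)) := hsub
    _ = |fc/νi| • (β * ∫ τ : ℝ, ∫ ν : ℝ,
          Complex.exp (2 * (π : ℂ) * Complex.I * ((fc : ℂ)/(νi : ℂ))
            * ((τ : ℂ) - τi) * ((ν : ℂ) - νi)) * φ (τ, ν)) := by
        rw [integral_congr_ae (Filter.Eventually.of_forall key), integral_const_mul]
    _ = (β * ((|fc / νi| : ℝ) : ℂ)) * ∫ τ : ℝ, ∫ ν : ℝ,
          Complex.exp (2 * (π : ℂ) * Complex.I * ((fc : ℂ)/(νi : ℂ))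
            * ((τ : ℂ) - τi) * ((ν : ℂ) - νi)) * φ (τ, ν) := by
        rw [Complex.real_smul]; ring
    _ = ∫ τ : ℝ, ∫ ν : ℝ, h τ ν * φ (τ, ν) := hRHS.symm
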